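/- arXiv:2102.05573 — 2 statements merged into one kernel-verified Lean document; each statement's English description precedes it below -/
import Mathlib

section
/- Let H be a real Hilbert space, Σ̂, Σ bounded self-adjoint positive operators, λ > 0, and μ, μ̂, ν, ν̂ ∈ H. Then ‖(Σ̂+λI)⁻¹(μ̂−ν̂) − (Σ+λI)⁻¹(μ−ν)‖ ≤ (1/λ)(‖μ̂−μ‖ + ‖ν−ν̂‖) + (1/λ²)‖Σ̂−Σ‖·‖μ−ν‖. -/
open scoped RealInnerProductSpace

lemma kfda_inv_bound
    {H : Type*} [NormedAddCommGroup H] [InnerProductSpace ℝ H] [CompleteSpace H]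
    (S : H →L[ℝ] H) (hS : S.IsPositive)
    (lam : ℝ) (hlam : 0 < lam) (B : H →L[ℝ] H)
    (hB₂ : (S + lam • 1) ∘L B = 1) (y : H) :
    ‖B y‖ ≤ (1 / lam) * ‖y‖ := by
  set x := B y with hx
  have hxy : S x + lam • x = y := by
    have := congrArg (fun T : H →L[ℝ] H => T y) hB₂
    simpa [ContinuousLinearMap.comp_apply] using this
  have hpos : 0 ≤ ⟪S x, x⟫ := hS.2 x
  have h1 : lam * ‖x‖ ^ 2 ≤ ⟪y, x⟫ := by
    have : ⟪y, x⟫ = ⟪S x, x⟫ + lam * ‖x‖ ^ 2 := by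
      rw [← hxy, inner_add_left, real_inner_smul_left, real_inner_self_eq_norm_sq]
    linarith
  have h2 : ⟪y, x⟫ ≤ ‖y‖ * ‖x‖ := real_inner_le_norm y x
  have h3 : lam * ‖x‖ ≤ ‖y‖ := by
    rcases eq_or_ne x 0 with h | h
    · simp [h]
    · have hxn : 0 < ‖x‖ := norm_pos_iff.mpr h
      nlinarith [h1, h2]
  rw [div_mul_eq_mul_div, one_mul, le_div_iff₀ hlam]
  linarith

/-- Deterministic error decomposition for the regularized KFDA witness:
`‖(Σ̂+λI)⁻¹(μ̂-ν̂) - (Σ+λI)⁻¹(μ-ν)‖ ≤ (1/λ)(‖μ̂-μ‖ + ‖ν-ν̂‖) + (1/λ²)‖Σ̂-Σ‖ ‖μ-ν‖`,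
where `B̂, B` denote the two-sided inverses of `Σ̂+λI` and `Σ+λI`. -/
theorem kfda_witness_error_decomposition
    {H : Type*} [NormedAddCommGroup H] [InnerProductSpace ℝ H] [CompleteSpace H]
    (Sh S : H →L[ℝ] H) (hSh : Sh.IsPositive) (hS : S.IsPositive)
    (lam : ℝ) (hlam : 0 < lam) (Bh B : H →L[ℝ] H)
    (hBh₁ : Bh ∘L (Sh + lam • 1) = 1) (hBh₂ : (Sh + lam • 1) ∘L Bh = 1)
    (hB₁ : B ∘L (S + lam • 1) = 1) (hB₂ : (S + lam • 1) ∘L B = 1)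
    (μ μh ν νh : H) :
    ‖Bh (μh - νh) - B (μ - ν)‖ ≤
      (1 / lam) * (‖μh - μ‖ + ‖ν - νh‖) + (1 / lam ^ 2) * ‖Sh - S‖ * ‖μ - ν‖ := by
  have hbh := kfda_inv_bound Sh hSh lam hlam Bh hBh₂
  have hb := kfda_inv_bound S hS lam hlam B hB₂
  have key : ∀ y : H, Bh y - B y = Bh ((S - Sh) (B y)) := by
    intro y
    have h1 : (S + lam • (1 : H →L[ℝ] H)) (B y) = y := by
      have := congrArg (fun T : H →L[ℝ] H => T y) hB₂
      simpa [ContinuousLinearMap.comp_apply] using this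
    have h2 : Bh ((Sh + lam • (1 : H →L[ℝ] H)) (B y)) = B y := by
      have := congrArg (fun T : H →L[ℝ] H => T (B y)) hBh₁
      simpa [ContinuousLinearMap.comp_apply] using this
    calc Bh y - B y
        = Bh ((S + lam • (1 : H →L[ℝ] H)) (B y))
          - Bh ((Sh + lam • (1 : H →L[ℝ] H)) (B y)) := by rw [h1, h2]
      _ = Bh ((S - Sh) (B y)) := by
          rw [← map_sub]
          congr 1
          simp only [ContinuousLinearMap.add_apply, ContinuousLinearMap.sub_apply,
            ContinuousLinearMap.smul_apply, ContinuousLinearMap.one_apply]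
          abel
  have hdiff : Bh (μh - νh) - B (μ - ν)
      = Bh ((μh - νh) - (μ - ν)) + Bh ((S - Sh) (B (μ - ν))) := by
    have e : Bh ((μh - νh) - (μ - ν)) = Bh (μh - νh) - Bh (μ - ν) := map_sub Bh _ _
    rw [← key (μ - ν), e]
    abel
  rw [hdiff]
  have n1 : ‖Bh ((μh - νh) - (μ - ν))‖ ≤ (1/lam) * (‖μh - μ‖ + ‖ν - νh‖) := by
    refine (hbh _).trans ?_
    have h : ‖(μh - νh) - (μ - ν)‖ ≤ ‖μh - μ‖ + ‖ν - νh‖ := by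
      have e : (μh - νh) - (μ - ν) = (μh - μ) + (ν - νh) := by abel
      rw [e]; exact norm_add_le _ _
    have hl : 0 ≤ 1/lam := by positivity
    exact mul_le_mul_of_nonneg_left h hl
  have n2 : ‖Bh ((S - Sh) (B (μ - ν)))‖ ≤ (1/lam^2) * ‖Sh - S‖ * ‖μ - ν‖ := by
    refine (hbh _).trans ?_
    have h1 : ‖(S - Sh) (B (μ - ν))‖ ≤ ‖S - Sh‖ * ‖B (μ - ν)‖ :=
      ContinuousLinearMap.le_opNorm _ _
    have h2 : ‖B (μ - ν)‖ ≤ (1/lam) * ‖μ - ν‖ := hb _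
    have hns : ‖S - Sh‖ = ‖Sh - S‖ := by rw [← neg_sub, norm_neg]
    have hl : 0 ≤ 1/lam := by positivity
    have hSn : 0 ≤ ‖S - Sh‖ := norm_nonneg _
    calc (1/lam) * ‖(S - Sh) (B (μ - ν))‖
        ≤ (1/lam) * (‖S - Sh‖ * ((1/lam) * ‖μ - ν‖)) := by
          refine mul_le_mul_of_nonneg_left ?_ hl
          exact h1.trans (mul_le_mul_of_nonneg_left h2 hSn)
      _ = (1/lam^2) * ‖Sh - S‖ * ‖μ - ν‖ := by rw [hns]; ring
  calc ‖Bh ((μh - νh) - (μ - ν)) + Bh ((S - Sh) (B (μ - ν)))‖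
      ≤ ‖Bh ((μh - νh) - (μ - ν))‖ + ‖Bh ((S - Sh) (B (μ - ν)))‖ := norm_add_le _ _
    _ ≤ (1 / lam) * (‖μh - μ‖ + ‖ν - νh‖) + (1 / lam ^ 2) * ‖Sh - S‖ * ‖μ - ν‖ :=
        add_le_add n1 n2
end

section
/- Let K be a symmetric positive semidefinite (n+m)×(n+m) real matrix, N a symmetric positive semidefinite (n+m)×(n+m) matrix, λ > 0, and δ ∈ ℝ^{n+m}. If K is invertible, then the vector α̂ = (K N K/(n+m) + λK)⁻¹ K δ satisfies the generalized normal equation (K N K/(n+m) + λK) α̂ = Kδ, and h(·) = Σᵢ α̂ᵢ k(zᵢ,·) maximizes α ↦ (δᵀKα)/(αᵀ(KNK/(n+m) + λK)α)^{1/2} over α ∈ ℝ^{n+m} (up to positive scaling), provided δᵀKδ > 0. -/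
open Matrix

private lemma psd_dot_symm {k : ℕ} {M : Matrix (Fin k) (Fin k) ℝ} (hM : M.PosSemidef)
    (a b : Fin k → ℝ) : a ⬝ᵥ M.mulVec b = b ⬝ᵥ M.mulVec a := by
  obtain ⟨B, rfl⟩ : ∃ B : Matrix (Fin k) (Fin k) ℝ, M = Bᴴ * B := by
    open scoped MatrixOrder in exact CStarAlgebra.nonneg_iff_eq_star_mul_self.mp hM.nonneg
  have key : ∀ x y : Fin k → ℝ, x ⬝ᵥ (Bᴴ * B).mulVec y = (B.mulVec x) ⬝ᵥ (B.mulVec y) := by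
    intro x y
    rw [← mulVec_mulVec, dotProduct_mulVec, vecMul_conjTranspose]
    simp [star_trivial]
  rw [key, key, dotProduct_comm]

private lemma psd_cauchy_schwarz {k : ℕ} {M : Matrix (Fin k) (Fin k) ℝ} (hM : M.PosSemidef)
    (a b : Fin k → ℝ) :
    (a ⬝ᵥ M.mulVec b) ^ 2 ≤ (a ⬝ᵥ M.mulVec a) * (b ⬝ᵥ M.mulVec b) := by
  obtain ⟨B, rfl⟩ : ∃ B : Matrix (Fin k) (Fin k) ℝ, M = Bᴴ * B := by
    open scoped MatrixOrder in exact CStarAlgebra.nonneg_iff_eq_star_mul_self.mp hM.nonneg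
  have key : ∀ x y : Fin k → ℝ, x ⬝ᵥ (Bᴴ * B).mulVec y = (B.mulVec x) ⬝ᵥ (B.mulVec y) := by
    intro x y
    rw [← mulVec_mulVec, dotProduct_mulVec, vecMul_conjTranspose]
    simp [star_trivial]
  rw [key, key, key]
  simpa [dotProduct, sq] using
    Finset.sum_mul_sq_le_sq_mul_sq Finset.univ (B.mulVec a) (B.mulVec b)

/-- Closed-form coefficients of the empirical KFDA witness: with `K` a symmetric
PSD invertible Gram matrix, `Nc` PSD, `λ > 0`, and `δᵀKδ > 0`, the vector
`α̂ = (KNK/(n+m) + λK)⁻¹ K δ` satisfies the normal equation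
`(KNK/(n+m) + λK) α̂ = Kδ` and maximizes
`α ↦ δᵀKα / (αᵀ(KNK/(n+m)+λK)α)^{1/2}`. -/
theorem kfda_dual_solution (n m : ℕ) (hnm : 0 < n + m)
    (K Nc : Matrix (Fin (n + m)) (Fin (n + m)) ℝ)
    (hK : K.PosSemidef) (hKinv : IsUnit K) (hNc : Nc.PosSemidef)
    (lam : ℝ) (hlam : 0 < lam) (δ : Fin (n + m) → ℝ)
    (hδ : 0 < δ ⬝ᵥ K.mulVec δ) :
    let M : Matrix (Fin (n + m)) (Fin (n + m)) ℝ :=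
      ((n + m : ℝ))⁻¹ • (K * Nc * K) + lam • K
    let αhat : Fin (n + m) → ℝ := M⁻¹.mulVec (K.mulVec δ)
    M.mulVec αhat = K.mulVec δ ∧
    ∀ α : Fin (n + m) → ℝ,
      (δ ⬝ᵥ K.mulVec α) / Real.sqrt (α ⬝ᵥ M.mulVec α) ≤
        (δ ⬝ᵥ K.mulVec αhat) / Real.sqrt (αhat ⬝ᵥ M.mulVec αhat) := by
  intro M αhat
  -- K is positive definite
  have hKpd : K.PosDef := by
    refine PosDef.of_dotProduct_mulVec_pos hK.1 fun x hx => lt_of_le_of_ne (hK.dotProduct_mulVec_nonneg x) fun h => hx ?_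
    have h0 : K.mulVec x = 0 := (hK.dotProduct_mulVec_zero_iff x).mp h.symm
    have hinj := Matrix.mulVec_injective_iff_isUnit.mpr hKinv
    exact hinj (by simpa using h0)
  -- the first summand is PSD
  have h1 : (K * Nc * K).PosSemidef := by
    have := hNc.mul_mul_conjTranspose_same K
    rwa [hK.1] at this
  have h1' : (((n + m : ℝ))⁻¹ • (K * Nc * K)).PosSemidef := by
    refine PosSemidef.of_dotProduct_mulVec_nonneg ?_ fun x => ?_
    · show _ = _
      rw [conjTranspose_smul, h1.1]
      simp
    · rw [smul_mulVec, dotProduct_smul, smul_eq_mul]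
      exact mul_nonneg (by positivity) (h1.dotProduct_mulVec_nonneg x)
  -- the second summand is positive definite
  have h2 : (lam • K).PosDef := by
    refine PosDef.of_dotProduct_mulVec_pos ?_ fun x hx => ?_
    · show _ = _
      rw [conjTranspose_smul, hKpd.1]
      simp
    · rw [smul_mulVec, dotProduct_smul, smul_eq_mul]
      exact mul_pos hlam (hKpd.dotProduct_mulVec_pos hx)
  have hMd : M.PosDef := Matrix.PosDef.posSemidef_add h1' h2
  have hMpsd : M.PosSemidef := hMd.posSemidef
  -- normal equation
  have hne : M.mulVec αhat = K.mulVec δ := by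
    show M.mulVec (M⁻¹.mulVec (K.mulVec δ)) = _
    rw [mulVec_mulVec, Matrix.mul_nonsing_inv _ (isUnit_iff_isUnit_det _ |>.mp hMd.isUnit),
      one_mulVec]
  refine ⟨hne, fun α => ?_⟩
  have hKδ : K.mulVec δ ≠ 0 := by
    intro h
    rw [h] at hδ
    simp at hδ
  have hαhat : αhat ≠ 0 := by
    intro h
    exact hKδ (by rw [← hne, h, mulVec_zero])
  have ht : 0 < αhat ⬝ᵥ M.mulVec αhat := by
    have := hMd.dotProduct_mulVec_pos hαhat
    simpa using this
  -- rewrite numerators via the normal equation and symmetry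
  have hnum : ∀ β : Fin (n + m) → ℝ, δ ⬝ᵥ K.mulVec β = αhat ⬝ᵥ M.mulVec β := by
    intro β
    rw [psd_dot_symm hK δ β, ← hne, psd_dot_symm hMpsd β αhat]
  rw [hnum α, hnum αhat, Real.div_sqrt]
  have hs0 : 0 ≤ α ⬝ᵥ M.mulVec α := by simpa using hMpsd.dotProduct_mulVec_nonneg α
  rcases hs0.eq_or_lt with hs | hs
  · rw [← hs, Real.sqrt_zero, div_zero]
    exact Real.sqrt_nonneg _
  · rw [div_le_iff₀ (Real.sqrt_pos.mpr hs)]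
    calc αhat ⬝ᵥ M.mulVec α ≤ |αhat ⬝ᵥ M.mulVec α| := le_abs_self _
      _ = Real.sqrt ((αhat ⬝ᵥ M.mulVec α) ^ 2) := (Real.sqrt_sq_eq_abs _).symm
      _ ≤ Real.sqrt ((αhat ⬝ᵥ M.mulVec αhat) * (α ⬝ᵥ M.mulVec α)) :=
          Real.sqrt_le_sqrt (psd_cauchy_schwarz hMpsd αhat α)
      _ = Real.sqrt (αhat ⬝ᵥ M.mulVec αhat) * Real.sqrt (α ⬝ᵥ M.mulVec α) :=
          Real.sqrt_mul ht.le _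
end
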